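/- The dimension of the Adini-type shape function space $\mathcal{P}_A = Q_1 \cdot \operatorname{span}\{1, x_i^2, x_i^4 \mid 1\le i\le n\}$ in $n$ variables equals $2^n(2n+1)$. -/

import Mathlib

open MvPolynomial Pointwise

/-- `Q1`: span of the multilinear monomials (each exponent at most 1). -/
noncomputable def Q1 (n : ℕ) : Submodule ℝ (MvPolynomial (Fin n) ℝ) :=
  Submodule.span ℝ {p | ∃ α : Fin n →₀ ℕ, (∀ i, α i ≤ 1) ∧ p = monomial α (1 : ℝ)}

/-- `A · B`: the span of products of elements of `A` and `B`. -/
noncomputable def prodSpan {n : ℕ} (A B : Submodule ℝ (MvPolynomial (Fin n) ℝ)) :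
    Submodule ℝ (MvPolynomial (Fin n) ℝ) :=
  Submodule.span ℝ {p | ∃ a ∈ A, ∃ b ∈ B, p = a * b}

/-- Adini-type shape function space `P_A = Q1 · span{1, x_i^2, x_i^4}`. -/
noncomputable def PA (n : ℕ) : Submodule ℝ (MvPolynomial (Fin n) ℝ) :=
  prodSpan (Q1 n)
    (Submodule.span ℝ ({1} ∪ {p | ∃ i : Fin n, p = X i ^ 2 ∨ p = X i ^ 4}))

/-- Index type for the monomial basis of `PA n`. -/
abbrev AdiniIdx (n : ℕ) :=
  (Fin n → Fin 2) ⊕ (Σ i : Fin n, Fin 4 × ({j : Fin n // j ≠ i} → Fin 2))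

/-- The exponent vector attached to an index. -/
noncomputable def adiniExp {n : ℕ} : AdiniIdx n → (Fin n →₀ ℕ)
  | Sum.inl f => Finsupp.equivFunOnFinite.symm fun j => (f j : ℕ)
  | Sum.inr ⟨i, k, g⟩ => Finsupp.equivFunOnFinite.symm fun j =>
      if h : j = i then (k : ℕ) + 2 else (g ⟨j, h⟩ : ℕ)

lemma adiniExp_inl {n : ℕ} (f : Fin n → Fin 2) (j : Fin n) :
    adiniExp (Sum.inl f) j = (f j : ℕ) := rfl

lemma adiniExp_inr {n : ℕ} (i : Fin n) (k : Fin 4) (g : {j : Fin n // j ≠ i} → Fin 2)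
    (j : Fin n) :
    adiniExp (Sum.inr ⟨i, k, g⟩) j = if h : j = i then (k : ℕ) + 2 else (g ⟨j, h⟩ : ℕ) := rfl

lemma adiniExp_inr_self {n : ℕ} (i : Fin n) (k : Fin 4) (g : {j : Fin n // j ≠ i} → Fin 2) :
    adiniExp (Sum.inr ⟨i, k, g⟩) i = (k : ℕ) + 2 := by
  rw [adiniExp_inr, dif_pos rfl]

lemma adiniExp_inr_ne {n : ℕ} (i : Fin n) (k : Fin 4) (g : {j : Fin n // j ≠ i} → Fin 2)
    (j : Fin n) (h : j ≠ i) :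
    adiniExp (Sum.inr ⟨i, k, g⟩) j = (g ⟨j, h⟩ : ℕ) := by
  rw [adiniExp_inr, dif_neg h]

lemma adiniExp_injective {n : ℕ} : Function.Injective (adiniExp (n := n)) := by
  rintro (f | ⟨i, k, g⟩) (f' | ⟨i', k', g'⟩) h
  · congr 1
    funext j
    have := congrArg (fun α => α j) h
    simpa [adiniExp_inl, Fin.val_inj] using this
  · exfalso
    have h1 := congrArg (fun α => α i') h
    simp only [adiniExp_inl, adiniExp_inr_self] at h1
    have := (f i').isLt
    omega
  · exfalso
    have h1 := congrArg (fun α => α i) h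
    simp only [adiniExp_inl, adiniExp_inr_self] at h1
    have := (f' i).isLt
    omega
  · have hii : i = i' := by
      by_contra hne
      have h1 := congrArg (fun α => α i) h
      simp only [adiniExp_inr_self, adiniExp_inr_ne i' k' g' i hne] at h1
      have := (g' ⟨i, hne⟩).isLt
      omega
    subst hii
    have hk : k = k' := by
      have h1 := congrArg (fun α => α i) h
      simp only [adiniExp_inr_self] at h1
      exact Fin.ext (by omega)
    subst hk
    have hg : g = g' := by
      funext j
      have h1 := congrArg (fun α => α j.1) h
      simp only [adiniExp_inr_ne i k g j.1 j.2, adiniExp_inr_ne i k g' j.1 j.2] at h1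
      exact Fin.ext (by simpa using h1)
    subst hg
    rfl

/-- Values of the exponent vectors. -/
lemma adiniExp_inl_le {n : ℕ} (f : Fin n → Fin 2) (j : Fin n) :
    adiniExp (Sum.inl f) j ≤ 1 := by
  have := (f j).isLt
  rw [adiniExp_inl]; omega

/-- The key decomposition of non-multilinear basis monomials as products. -/
lemma adini_decomp {n : ℕ} (i : Fin n) (k : Fin 4) (g : {j : Fin n // j ≠ i} → Fin 2) :
    monomial (adiniExp (Sum.inr ⟨i, k, g⟩)) (1 : ℝ) =
      monomial (Finsupp.equivFunOnFinite.symm fun j =>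
          if h : j = i then (k : ℕ) % 2 else (g ⟨j, h⟩ : ℕ)) (1 : ℝ)
        * X i ^ (2 + 2 * ((k : ℕ) / 2)) := by
  rw [X_pow_eq_monomial, monomial_mul, mul_one]
  have hexp : adiniExp (Sum.inr ⟨i, k, g⟩) =
      (Finsupp.equivFunOnFinite.symm fun j =>
        if h : j = i then (k : ℕ) % 2 else (g ⟨j, h⟩ : ℕ)) +
        Finsupp.single i (2 + 2 * ((k : ℕ) / 2)) := by
    ext j
    by_cases h : j = i
    · subst h
      simp [adiniExp_inr_self, Finsupp.single_eq_same]
      omega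
    · simp only [adiniExp_inr_ne i k g j h, Finsupp.add_apply,
        Finsupp.single_eq_of_ne' (Ne.symm h), Finsupp.coe_equivFunOnFinite_symm,
        dif_neg h, add_zero]
  rw [hexp]

theorem finrank_PA (n : ℕ) (hn : 1 ≤ n) :
    Module.finrank ℝ ↥(PA n) = 2 ^ n * (2 * n + 1) := by
  classical
  set SA : Set (MvPolynomial (Fin n) ℝ) :=
    {p | ∃ α : Fin n →₀ ℕ, (∀ i, α i ≤ 1) ∧ p = monomial α (1 : ℝ)} with hSA
  set SB : Set (MvPolynomial (Fin n) ℝ) :=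
    ({1} ∪ {p | ∃ i : Fin n, p = X i ^ 2 ∨ p = X i ^ 4}) with hSB
  set b : AdiniIdx n → MvPolynomial (Fin n) ℝ :=
    fun idx => monomial (adiniExp idx) (1 : ℝ) with hb
  -- `PA n` as the span of products of generators
  have hPA : PA n = Submodule.span ℝ (SA * SB) := by
    rw [PA, prodSpan]
    have hset : {p | ∃ a ∈ Q1 n, ∃ b ∈ Submodule.span ℝ SB, p = a * b}
        = (Q1 n : Set (MvPolynomial (Fin n) ℝ)) * (Submodule.span ℝ SB : Submodule ℝ _) := by
      ext p
      simp only [Set.mem_setOf_eq, Set.mem_mul, SetLike.mem_coe]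
      constructor
      · rintro ⟨a, ha, c, hc, rfl⟩; exact ⟨a, ha, c, hc, rfl⟩
      · rintro ⟨a, ha, c, hc, rfl⟩; exact ⟨a, ha, c, hc, rfl⟩
    rw [hset, ← Submodule.mul_eq_span_mul_set, Q1, Submodule.span_mul_span]
  -- `PA n` as the span of an independent family of monomials
  have key : PA n = Submodule.span ℝ (Set.range b) := by
    rw [hPA]
    apply le_antisymm
    · rw [Submodule.span_le]
      rintro p hp
      rw [Set.mem_mul] at hp
      obtain ⟨a, ha, m, hm, rfl⟩ := hp
      obtain ⟨α, hα, rfl⟩ := ha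
      have hprod : ∀ i : Fin n, ∀ k : ℕ, k = 2 ∨ k = 4 →
          monomial α (1 : ℝ) * X i ^ k ∈ Submodule.span ℝ (Set.range b) := by
        intro i k hk
        have hk2 : 2 ≤ k := by omega
        have hlt : α i + k - 2 < 4 := by have := hα i; omega
        refine Submodule.subset_span ⟨Sum.inr ⟨i, ⟨α i + k - 2, hlt⟩,
          fun j => ⟨α j.1, by have := hα j.1; omega⟩⟩, ?_⟩
        simp only [hb]
        rw [X_pow_eq_monomial, monomial_mul, mul_one]
        have hexp : adiniExp (Sum.inr ⟨i, (⟨α i + k - 2, hlt⟩ : Fin 4),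
            fun j => (⟨α j.1, by have := hα j.1; omega⟩ : Fin 2)⟩) = α + Finsupp.single i k := by
          ext j
          by_cases h : j = i
          · subst h
            rw [adiniExp_inr_self]
            simp only [Finsupp.add_apply, Finsupp.single_eq_same]
            omega
          · rw [adiniExp_inr_ne _ _ _ j h]
            simp only [Finsupp.add_apply, Finsupp.single_eq_of_ne' (Ne.symm h), add_zero]
        rw [hexp]
      rcases hm with hm | ⟨i, hm | hm⟩
      · -- m = 1
        rcases hm with rfl
        refine Submodule.subset_span ⟨Sum.inl fun j => ⟨α j, by have := hα j; omega⟩, ?_⟩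
        simp only [hb, mul_one]
        have hexp : adiniExp (Sum.inl fun j =>
            (⟨α j, by have := hα j; omega⟩ : Fin 2)) = α := by
          ext j
          rw [adiniExp_inl]
        rw [hexp]
      · rcases hm with rfl; exact hprod i 2 (Or.inl rfl)
      · rcases hm with rfl; exact hprod i 4 (Or.inr rfl)
    · rw [Submodule.span_le]
      rintro p ⟨idx, rfl⟩
      apply Submodule.subset_span
      rw [Set.mem_mul]
      rcases idx with f | ⟨i, k, g⟩
      · refine ⟨monomial (adiniExp (Sum.inl f)) 1,
          ⟨adiniExp (Sum.inl f), adiniExp_inl_le f, rfl⟩, 1, Or.inl rfl, mul_one _⟩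
      · refine ⟨monomial (Finsupp.equivFunOnFinite.symm fun j =>
            if h : j = i then (k : ℕ) % 2 else (g ⟨j, h⟩ : ℕ)) 1,
          ⟨_, ?_, rfl⟩, X i ^ (2 + 2 * ((k : ℕ) / 2)), Or.inr ⟨i, ?_⟩,
          (adini_decomp i k g).symm⟩
        · intro j
          simp only [Finsupp.coe_equivFunOnFinite_symm]
          by_cases h : j = i
          · rw [dif_pos h]; omega
          · rw [dif_neg h]; have := (g ⟨j, h⟩).isLt; omega
        · have hk : (k : ℕ) / 2 = 0 ∨ (k : ℕ) / 2 = 1 := by have := k.isLt; omega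
          rcases hk with hk | hk <;> rw [hk]
          · left; norm_num
          · right; norm_num
  -- linear independence
  have li : LinearIndependent ℝ b := by
    have := (basisMonomials (Fin n) ℝ).linearIndependent.comp adiniExp adiniExp_injective
    rw [coe_basisMonomials] at this
    exact this
  rw [key, finrank_span_eq_card li]
  -- cardinality count
  have hsub : ∀ i : Fin n, Fintype.card {j : Fin n // j ≠ i} = n - 1 := by
    intro i
    simp [Fintype.card_subtype_compl, Fintype.card_subtype_eq]
  have hcard : Fintype.card (AdiniIdx n) = 2 ^ n + n * (4 * 2 ^ (n - 1)) := by
    rw [Fintype.card_sum, Fintype.card_sigma]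
    congr 1
    · simp
    · calc (∑ i : Fin n, Fintype.card (Fin 4 × ({j : Fin n // j ≠ i} → Fin 2)))
          = ∑ _i : Fin n, 4 * 2 ^ (n - 1) :=
            Finset.sum_congr rfl fun i _ => by simp [hsub i]
        _ = n * (4 * 2 ^ (n - 1)) := by
            simp [Finset.sum_const, Finset.card_univ]
  rw [hcard]
  obtain ⟨m, rfl⟩ : ∃ m, n = m + 1 := ⟨n - 1, by omega⟩
  simp only [Nat.add_sub_cancel, pow_succ]
  ring
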